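/- The group H(4,3) = H_4(3,1), defined by the presentation ⟨x_1,x_2,x_3,x_4 | x_i x_{i+3} = x_{i+1} for 1 ≤ i ≤ 4, subscripts mod 4⟩, is cyclic of order 5. -/

import Mathlib

/-- The relators `x_i x_{i+3} x_{i+1}⁻¹` (subscripts mod 4) of the presentation
`H(4,3) = H₄(3,1) = ⟨x₁,…,x₄ ∣ x_i x_{i+3} = x_{i+1} (1 ≤ i ≤ 4)⟩`. -/
def relsH43 : Set (FreeGroup (ZMod 4)) :=
  Set.range fun i : ZMod 4 =>
    FreeGroup.of i * FreeGroup.of (i + 3) * (FreeGroup.of (i + 1))⁻¹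

namespace H43aux

open PresentedGroup

local notation "a" => (PresentedGroup.of (0 : ZMod 4) : PresentedGroup relsH43)
local notation "b" => (PresentedGroup.of (1 : ZMod 4) : PresentedGroup relsH43)
local notation "c" => (PresentedGroup.of (2 : ZMod 4) : PresentedGroup relsH43)
local notation "d" => (PresentedGroup.of (3 : ZMod 4) : PresentedGroup relsH43)

/-- The defining relations hold in the presented group. -/
lemma rel (i : ZMod 4) :
    (of i : PresentedGroup relsH43) * of (i + 3) = of (i + 1) := by
  have h : (mk relsH43) (FreeGroup.of i * FreeGroup.of (i + 3) * (FreeGroup.of (i + 1))⁻¹)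
      = 1 := by
    have hmem : (FreeGroup.of i * FreeGroup.of (i + 3) * (FreeGroup.of (i + 1))⁻¹)
        ∈ Subgroup.normalClosure relsH43 :=
      Subgroup.subset_normalClosure ⟨i, rfl⟩
    exact (QuotientGroup.eq_one_iff _).mpr hmem
  have h' : (of i : PresentedGroup relsH43) * of (i + 3) * (of (i + 1))⁻¹ = 1 := by
    simpa [of, map_mul, map_inv] using h
  exact mul_inv_eq_one.mp h'

lemma r0 : a * d = b := by
  have := rel (0 : ZMod 4)
  rwa [show (0 : ZMod 4) + 3 = 3 by decide, show (0 : ZMod 4) + 1 = 1 by decide] at this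

lemma r1 : b * a = c := by
  have := rel (1 : ZMod 4)
  rwa [show (1 : ZMod 4) + 3 = 0 by decide, show (1 : ZMod 4) + 1 = 2 by decide] at this

lemma r2 : c * b = d := by
  have := rel (2 : ZMod 4)
  rwa [show (2 : ZMod 4) + 3 = 1 by decide, show (2 : ZMod 4) + 1 = 3 by decide] at this

lemma r3 : d * c = a := by
  have := rel (3 : ZMod 4)
  rwa [show (3 : ZMod 4) + 3 = 2 by decide, show (3 : ZMod 4) + 1 = 0 by decide] at this

lemma hd : d = b * a * b := by rw [← r2, ← r1]

lemma aba : a * b * a = 1 := by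
  have h0 : a * (b * a * b) = b := by rw [← hd]; exact r0
  have e : (a * b * a) * b = 1 * b := by
    rw [one_mul]
    calc (a * b * a) * b = a * (b * a * b) := by group
      _ = b := h0
  exact mul_right_cancel e

lemma hb : b = a⁻¹ * a⁻¹ := by
  calc b = a⁻¹ * (a * b * a) * a⁻¹ := by group
    _ = a⁻¹ * 1 * a⁻¹ := by rw [aba]
    _ = a⁻¹ * a⁻¹ := by group

lemma ha5 : a ^ 5 = 1 := by
  have e2 : (b * a * b) * (b * a) = a := by rw [← hd, r1]; exact r3
  rw [hb] at e2
  have e3 : a ^ (-4 : ℤ) = a := by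
    calc a ^ (-4 : ℤ)
        = a⁻¹ * a⁻¹ * a * (a⁻¹ * a⁻¹) * (a⁻¹ * a⁻¹ * a) := by group
      _ = a := e2
  have e4 : a ^ (5 : ℤ) = 1 := by
    calc a ^ (5 : ℤ) = (a ^ (-4 : ℤ))⁻¹ * a := by group
      _ = a⁻¹ * a := by rw [e3]
      _ = 1 := inv_mul_cancel _
  have := e4
  rw [show (5 : ℤ) = ((5 : ℕ) : ℤ) by norm_num, zpow_natCast] at this
  exact this

lemma mem_zpowers (i : ZMod 4) :
    (of i : PresentedGroup relsH43) ∈ Subgroup.zpowers a := by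
  have hamem : a ∈ Subgroup.zpowers a := Subgroup.mem_zpowers _
  have hbmem : b ∈ Subgroup.zpowers a := by
    rw [hb]; exact mul_mem (inv_mem hamem) (inv_mem hamem)
  have hcmem : c ∈ Subgroup.zpowers a := by rw [← r1]; exact mul_mem hbmem hamem
  have hdmem : d ∈ Subgroup.zpowers a := by rw [← r2]; exact mul_mem hcmem hbmem
  fin_cases i
  · exact hamem
  · exact hbmem
  · exact hcmem
  · exact hdmem

lemma zpowers_top : Subgroup.zpowers a = ⊤ := by
  rw [eq_top_iff, ← closure_range_of relsH43, Subgroup.closure_le]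
  rintro x ⟨i, rfl⟩
  exact mem_zpowers i

/-- The homomorphism to `ZMod 5` (multiplicatively). -/
noncomputable def φ : PresentedGroup relsH43 →* Multiplicative (ZMod 5) :=
  PresentedGroup.toGroup (f := fun i : ZMod 4 => Multiplicative.ofAdd (![2, 1, 3, 4] (Fin.ofNat 4 i.val)))
    (by
      rintro r ⟨i, rfl⟩
      simp only [map_mul, map_inv, FreeGroup.lift_apply_of]
      fin_cases i <;> decide)

lemma φ_of (i : ZMod 4) : φ (of i) = Multiplicative.ofAdd (![2, 1, 3, 4] (Fin.ofNat 4 i.val)) :=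
  PresentedGroup.toGroup.of _

lemma orderOf_gen : orderOf (Multiplicative.ofAdd (2 : ZMod 5)) = 5 := by
  haveI : Fact (Nat.Prime 5) := ⟨by norm_num⟩
  refine orderOf_eq_prime ?_ ?_ <;> decide

lemma orderOf_a : orderOf a = 5 := by
  have h1 : orderOf a ∣ 5 := orderOf_dvd_of_pow_eq_one ha5
  have h2 : orderOf (φ a) ∣ orderOf a := orderOf_map_dvd φ a
  have h3 : orderOf (φ a) = 5 := by
    rw [φ_of]
    simpa using orderOf_gen
  rw [h3] at h2
  exact Nat.dvd_antisymm h1 h2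

lemma mem_all (x : PresentedGroup relsH43) : x ∈ Subgroup.zpowers a := by
  rw [zpowers_top]; exact Subgroup.mem_top x

end H43aux

/-- The group `H(4,3) = H₄(3,1)` is cyclic of order `5`. -/
theorem H43_cyclic_of_order_five :
    IsCyclic (PresentedGroup relsH43) ∧ Nat.card (PresentedGroup relsH43) = 5 := by
  constructor
  · exact ⟨⟨PresentedGroup.of (0 : ZMod 4), H43aux.mem_all⟩⟩
  · rw [← H43aux.orderOf_a, ← Nat.card_zpowers, H43aux.zpowers_top]
    exact (Nat.card_congr Subgroup.topEquiv.toEquiv).symm
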